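/- Suppose S : ℝⁿ → ℝ is twice continuously differentiable and ψ ∈ ℝ is a constant such that the gradient-homothetic equation ∂_i ∂_j S(x) − Σ_l Γ^l_{ij}(x) ∂_l S(x) = ψ g_{ij}(x) holds for all x and all i, j. Then along every geodesic of g the quantity ½ ψ s² Σ_{i,j} g_{ij}(x(s)) ẋ^i(s) ẋ^j(s) − s Σ_i ∂_i S(x(s)) ẋ^i(s) + S(x(s)) is constant in s; a gradient homothetic Killing vector gives the Noether first integral φ = ½ t² ψ g_{ij} ẋ^i ẋ^j − t S_{,i} ẋ^i + S of the geodesic Lagrangian. -/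

import Mathlib

/-- The Christoffel symbols `Γ^i_{jk}(x) = ½ Σ_l (g(x)⁻¹)_{il}
(∂_j g_{lk}(x) + ∂_k g_{lj}(x) − ∂_l g_{jk}(x))` of a metric `g` on `ℝⁿ`,
given in coordinates; `∂_j` is the directional derivative along `Pi.single j 1`. -/
noncomputable def christoffel {n : ℕ} (g : (Fin n → ℝ) → Matrix (Fin n) (Fin n) ℝ)
    (i j k : Fin n) (x : Fin n → ℝ) : ℝ :=
  (1 / 2) * ∑ l, (g x)⁻¹ i l *
    (fderiv ℝ (fun y => g y l k) x (Pi.single j 1)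
      + fderiv ℝ (fun y => g y l j) x (Pi.single k 1)
      - fderiv ℝ (fun y => g y j k) x (Pi.single l 1))

/-- A geodesic of `g`: a twice continuously differentiable curve `γ : ℝ → ℝⁿ` with
`ẍ^i = −Σ_{j,k} Γ^i_{jk}(x) ẋ^j ẋ^k`. -/
def IsGeodesic {n : ℕ} (g : (Fin n → ℝ) → Matrix (Fin n) (Fin n) ℝ)
    (γ : ℝ → Fin n → ℝ) : Prop :=
  (∀ i, ContDiff ℝ 2 (fun s => γ s i)) ∧
  ∀ s i, deriv (deriv (fun t => γ t i)) s =
    - ∑ j, ∑ k, christoffel g i j k (γ s) *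
      deriv (fun t => γ t j) s * deriv (fun t => γ t k) s

/-- A continuous linear functional on `ℝⁿ` is determined by its values on the basis. -/
private lemma clm_sum_repr {n : ℕ} (L : (Fin n → ℝ) →L[ℝ] ℝ) (w : Fin n → ℝ) :
    L w = ∑ i, w i * L (Pi.single i 1) := by
  have hw : w = ∑ i, w i • (Pi.single i 1 : Fin n → ℝ) := by
    funext j; simp [Pi.single_apply, eq_comm]
  conv_lhs => rw [hw]
  rw [map_sum]
  simp [smul_eq_mul]

/-- Rotating a triple sum. -/
private lemma sum_rot3 {M : Type*} [AddCommMonoid M] {n : ℕ} (f : Fin n → Fin n → Fin n → M) :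
    ∑ i, ∑ j, ∑ k, f i j k = ∑ j, ∑ k, ∑ i, f i j k := by
  rw [Finset.sum_comm]
  exact Finset.sum_congr rfl fun j _ => Finset.sum_comm

private lemma sum3_half {n : ℕ} (f1 f2 f3 w : Fin n → Fin n → Fin n → ℝ) :
    (∑ j, ∑ k, ∑ l, (1/2 * (f1 j k l + f2 j k l - f3 j k l)) * w j k l)
      = 1/2 * (∑ j, ∑ k, ∑ l, f1 j k l * w j k l)
        + 1/2 * (∑ j, ∑ k, ∑ l, f2 j k l * w j k l)
        - 1/2 * (∑ j, ∑ k, ∑ l, f3 j k l * w j k l) := by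
  simp only [Finset.mul_sum, ← Finset.sum_add_distrib, ← Finset.sum_sub_distrib]
  exact Finset.sum_congr rfl fun _ _ => Finset.sum_congr rfl fun _ _ =>
    Finset.sum_congr rfl fun _ _ => by ring

/-- Lowering the upper index of the Christoffel symbols with the metric. -/
private lemma lowered_christoffel {n : ℕ} (g : (Fin n → ℝ) → Matrix (Fin n) (Fin n) ℝ)
    (hg_inv : ∀ x, IsUnit (g x).det) (p : Fin n → ℝ) (m j k : Fin n) :
    ∑ i, g p m i * christoffel g i j k p =
      1/2 * (fderiv ℝ (fun y => g y m k) p (Pi.single j 1)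
        + fderiv ℝ (fun y => g y m j) p (Pi.single k 1)
        - fderiv ℝ (fun y => g y j k) p (Pi.single m 1)) := by
  unfold christoffel
  have hginv : g p * (g p)⁻¹ = 1 := Matrix.mul_nonsing_inv (g p) (hg_inv p)
  calc ∑ i, g p m i * ((1/2) * ∑ l, (g p)⁻¹ i l *
        (fderiv ℝ (fun y => g y l k) p (Pi.single j 1)
          + fderiv ℝ (fun y => g y l j) p (Pi.single k 1)
          - fderiv ℝ (fun y => g y j k) p (Pi.single l 1)))
      = ∑ l, (∑ i, g p m i * (g p)⁻¹ i l) * ((1/2) *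
        (fderiv ℝ (fun y => g y l k) p (Pi.single j 1)
          + fderiv ℝ (fun y => g y l j) p (Pi.single k 1)
          - fderiv ℝ (fun y => g y j k) p (Pi.single l 1))) := by
        simp only [Finset.mul_sum]
        rw [Finset.sum_comm]
        refine Finset.sum_congr rfl fun l _ => ?_
        rw [Finset.sum_mul]
        refine Finset.sum_congr rfl fun i _ => ?_
        ring
    _ = _ := by
        have h1 : ∀ l, (∑ i, g p m i * (g p)⁻¹ i l) = (1 : Matrix (Fin n) (Fin n) ℝ) m l := by
          intro l; rw [← Matrix.mul_apply, hginv]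
        simp only [h1, Matrix.one_apply]
        simp [ite_mul]

/-- Conservation of energy: the derivative of `g_{ij} ẋ^i ẋ^j` along a geodesic vanishes. -/
private lemma noether_A' {n : ℕ} (g : (Fin n → ℝ) → Matrix (Fin n) (Fin n) ℝ)
    (hg_symm : ∀ x i j, g x i j = g x j i)
    (hg_inv : ∀ x, IsUnit (g x).det) (p v a : Fin n → ℝ)
    (ha : ∀ i, a i = -∑ j, ∑ k, christoffel g i j k p * v j * v k) :
    ∑ i, ∑ j, (((∑ k, v k * fderiv ℝ (fun y => g y i j) p (Pi.single k 1)) * v i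
        + g p i j * a i) * v j + g p i j * v i * a j) = 0 := by
  have e0 : ∑ i, ∑ j, (((∑ k, v k * fderiv ℝ (fun y => g y i j) p (Pi.single k 1)) * v i
        + g p i j * a i) * v j + g p i j * v i * a j)
      = ((∑ i, ∑ j, (∑ k, v k * fderiv ℝ (fun y => g y i j) p (Pi.single k 1)) * v i * v j)
        + ∑ i, ∑ j, g p i j * a i * v j)
        + ∑ i, ∑ j, g p i j * v i * a j := by
    simp only [add_mul, Finset.sum_add_distrib]
  have e1 : (∑ i, ∑ j, (∑ k, v k * fderiv ℝ (fun y => g y i j) p (Pi.single k 1)) * v i * v j)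
      = ∑ i, ∑ j, ∑ k, fderiv ℝ (fun y => g y i j) p (Pi.single k 1) * v i * v j * v k := by
    refine Finset.sum_congr rfl fun i _ => Finset.sum_congr rfl fun j _ => ?_
    rw [Finset.sum_mul, Finset.sum_mul]
    exact Finset.sum_congr rfl fun k _ => by ring
  have e3 : (∑ i, ∑ j, g p i j * v i * a j) = ∑ i, ∑ j, g p i j * a i * v j := by
    rw [Finset.sum_comm]
    exact Finset.sum_congr rfl fun i _ => Finset.sum_congr rfl fun j _ => by
      rw [hg_symm p j i]; ring
  have e2 : (∑ i, ∑ j, g p i j * a i * v j)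
      = -(1/2 * ∑ i, ∑ j, ∑ k, fderiv ℝ (fun y => g y i j) p (Pi.single k 1) * v i * v j * v k) := by
    have step1 : (∑ i, ∑ j, g p i j * a i * v j)
        = -∑ j, ∑ k, ∑ l, (∑ i, g p j i * christoffel g i k l p) * (v k * v l * v j) := by
      rw [Finset.sum_comm, ← Finset.sum_neg_distrib]
      refine Finset.sum_congr rfl fun j _ => ?_
      calc ∑ i, g p i j * a i * v j
          = ∑ i, -(∑ k, ∑ l, g p j i * christoffel g i k l p * (v k * v l * v j)) := by
            refine Finset.sum_congr rfl fun i _ => ?_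
            rw [ha i, hg_symm p i j, mul_neg, neg_mul, neg_inj]
            rw [Finset.mul_sum, Finset.sum_mul]
            refine Finset.sum_congr rfl fun k _ => ?_
            rw [Finset.mul_sum, Finset.sum_mul]
            exact Finset.sum_congr rfl fun l _ => by ring
        _ = -(∑ i, ∑ k, ∑ l, g p j i * christoffel g i k l p * (v k * v l * v j)) :=
            Finset.sum_neg_distrib _
        _ = -(∑ k, ∑ l, ∑ i, g p j i * christoffel g i k l p * (v k * v l * v j)) := by
            rw [sum_rot3 (fun i k l => g p j i * christoffel g i k l p * (v k * v l * v j))]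
        _ = -(∑ k, ∑ l, (∑ i, g p j i * christoffel g i k l p) * (v k * v l * v j)) := by
            congr 1
            exact Finset.sum_congr rfl fun k _ => Finset.sum_congr rfl fun l _ =>
              (Finset.sum_mul _ _ _).symm
    rw [step1]
    simp only [lowered_christoffel g hg_inv p]
    rw [sum3_half (fun j k l => fderiv ℝ (fun y => g y j l) p (Pi.single k 1))
      (fun j k l => fderiv ℝ (fun y => g y j k) p (Pi.single l 1))
      (fun j k l => fderiv ℝ (fun y => g y k l) p (Pi.single j 1))
      (fun j k l => v k * v l * v j)]
    have hU1 : (∑ j, ∑ k, ∑ l, fderiv ℝ (fun y => g y j l) p (Pi.single k 1) * (v k * v l * v j))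
        = ∑ i, ∑ j, ∑ k, fderiv ℝ (fun y => g y i j) p (Pi.single k 1) * v i * v j * v k := by
      refine Finset.sum_congr rfl fun j _ => ?_
      rw [Finset.sum_comm]
      exact Finset.sum_congr rfl fun l _ => Finset.sum_congr rfl fun k _ => by ring
    have hU2 : (∑ j, ∑ k, ∑ l, fderiv ℝ (fun y => g y j k) p (Pi.single l 1) * (v k * v l * v j))
        = ∑ i, ∑ j, ∑ k, fderiv ℝ (fun y => g y i j) p (Pi.single k 1) * v i * v j * v k := by
      exact Finset.sum_congr rfl fun j _ => Finset.sum_congr rfl fun k _ =>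
        Finset.sum_congr rfl fun l _ => by ring
    have hU3 : (∑ j, ∑ k, ∑ l, fderiv ℝ (fun y => g y k l) p (Pi.single j 1) * (v k * v l * v j))
        = ∑ i, ∑ j, ∑ k, fderiv ℝ (fun y => g y i j) p (Pi.single k 1) * v i * v j * v k := by
      rw [sum_rot3 (fun j k l => fderiv ℝ (fun y => g y k l) p (Pi.single j 1) * (v k * v l * v j))]
      exact Finset.sum_congr rfl fun k _ => Finset.sum_congr rfl fun l _ =>
        Finset.sum_congr rfl fun j _ => by ring
    rw [hU1, hU2, hU3]
    ring
  rw [e0, e1, e2, e3, e2]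
  ring

/-- The derivative of `S_{,i} ẋ^i` along a geodesic equals `ψ g_{ij} ẋ^i ẋ^j`. -/
private lemma noether_B' {n : ℕ} (g : (Fin n → ℝ) → Matrix (Fin n) (Fin n) ℝ)
    (S : (Fin n → ℝ) → ℝ) (ψ : ℝ) (p v a : Fin n → ℝ)
    (hgradHV : ∀ i j,
      fderiv ℝ (fun y => fderiv ℝ S y (Pi.single j 1)) p (Pi.single i 1)
        - ∑ l, christoffel g l i j p * fderiv ℝ S p (Pi.single l 1)
        = ψ * g p i j)
    (ha : ∀ i, a i = -∑ j, ∑ k, christoffel g i j k p * v j * v k) :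
    ∑ i, ((∑ j, v j * fderiv ℝ (fun y => fderiv ℝ S y (Pi.single i 1)) p (Pi.single j 1)) * v i
        + fderiv ℝ S p (Pi.single i 1) * a i)
      = ψ * ∑ i, ∑ j, g p i j * v i * v j := by
  have hDDS : ∀ i j, fderiv ℝ (fun y => fderiv ℝ S y (Pi.single i 1)) p (Pi.single j 1)
      = ψ * g p j i + ∑ l, christoffel g l j i p * fderiv ℝ S p (Pi.single l 1) := by
    intro i j
    have h := hgradHV j i
    linarith
  have e0 : ∑ i, ((∑ j, v j * fderiv ℝ (fun y => fderiv ℝ S y (Pi.single i 1)) p (Pi.single j 1)) * v i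
        + fderiv ℝ S p (Pi.single i 1) * a i)
      = (∑ i, (∑ j, v j * fderiv ℝ (fun y => fderiv ℝ S y (Pi.single i 1)) p (Pi.single j 1)) * v i)
        + ∑ i, fderiv ℝ S p (Pi.single i 1) * a i := Finset.sum_add_distrib
  have e1 : (∑ i, (∑ j, v j * fderiv ℝ (fun y => fderiv ℝ S y (Pi.single i 1)) p (Pi.single j 1)) * v i)
      = (∑ i, ∑ j, v j * (ψ * g p j i) * v i)
        + ∑ i, ∑ j, ∑ l, christoffel g l j i p * fderiv ℝ S p (Pi.single l 1) * v j * v i := by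
    rw [← Finset.sum_add_distrib]
    refine Finset.sum_congr rfl fun i _ => ?_
    rw [Finset.sum_mul, ← Finset.sum_add_distrib]
    refine Finset.sum_congr rfl fun j _ => ?_
    rw [hDDS i j, mul_add, add_mul]
    congr 1
    rw [Finset.mul_sum, Finset.sum_mul]
    exact Finset.sum_congr rfl fun l _ => by ring
  have e2 : (∑ i, fderiv ℝ S p (Pi.single i 1) * a i)
      = -∑ i, ∑ j, ∑ k, christoffel g i j k p * fderiv ℝ S p (Pi.single i 1) * v j * v k := by
    rw [← Finset.sum_neg_distrib]
    refine Finset.sum_congr rfl fun i _ => ?_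
    rw [ha i, mul_neg, neg_inj]
    rw [Finset.mul_sum]
    refine Finset.sum_congr rfl fun j _ => ?_
    rw [Finset.mul_sum]
    exact Finset.sum_congr rfl fun k _ => by ring
  have e3 : (∑ i, ∑ j, ∑ l, christoffel g l j i p * fderiv ℝ S p (Pi.single l 1) * v j * v i)
      = ∑ i, ∑ j, ∑ k, christoffel g i j k p * fderiv ℝ S p (Pi.single i 1) * v j * v k := by
    rw [sum_rot3 (fun i j l =>
      christoffel g l j i p * fderiv ℝ S p (Pi.single l 1) * v j * v i)]
    rw [Finset.sum_comm]
  have e4 : (∑ i, ∑ j, v j * (ψ * g p j i) * v i) = ψ * ∑ i, ∑ j, g p i j * v i * v j := by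
    rw [Finset.sum_comm, Finset.mul_sum]
    refine Finset.sum_congr rfl fun i _ => ?_
    rw [Finset.mul_sum]
    exact Finset.sum_congr rfl fun j _ => by ring
  rw [e0, e1, e2, e3, e4]
  ring

/-- A gradient homothetic Killing vector generated by `S` with constant
factor `ψ`, i.e. `∂_i ∂_j S − Σ_l Γ^l_{ij} ∂_l S = ψ g_{ij}`, gives the Noether first
integral `½ ψ s² Σ_{i,j} g_{ij} ẋ^i ẋ^j − s Σ_i ∂_i S ẋ^i + S` of the geodesic Lagrangian. -/
theorem gradient_homothetic_noether_first_integral {n : ℕ} (hn : 1 ≤ n)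
    (g : (Fin n → ℝ) → Matrix (Fin n) (Fin n) ℝ)
    (hg_symm : ∀ x i j, g x i j = g x j i)
    (hg_inv : ∀ x, IsUnit (g x).det)
    (hg_C1 : ∀ i j, ContDiff ℝ 1 fun x => g x i j)
    (S : (Fin n → ℝ) → ℝ) (ψ : ℝ) (hS : ContDiff ℝ 2 S)
    (hgradHV : ∀ x i j,
      fderiv ℝ (fun y => fderiv ℝ S y (Pi.single j 1)) x (Pi.single i 1)
        - ∑ l, christoffel g l i j x * fderiv ℝ S x (Pi.single l 1)
        = ψ * g x i j)
    (γ : ℝ → Fin n → ℝ) (hγ : IsGeodesic g γ) (s₁ s₂ : ℝ) :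
    (1 / 2) * ψ * s₁ ^ 2 *
        (∑ i, ∑ j, g (γ s₁) i j * deriv (fun t => γ t i) s₁ * deriv (fun t => γ t j) s₁)
        - s₁ * (∑ i, fderiv ℝ S (γ s₁) (Pi.single i 1) * deriv (fun t => γ t i) s₁)
        + S (γ s₁)
      = (1 / 2) * ψ * s₂ ^ 2 *
        (∑ i, ∑ j, g (γ s₂) i j * deriv (fun t => γ t i) s₂ * deriv (fun t => γ t j) s₂)
        - s₂ * (∑ i, fderiv ℝ S (γ s₂) (Pi.single i 1) * deriv (fun t => γ t i) s₂)
        + S (γ s₂) := by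
  obtain ⟨hC2, hgeo⟩ := hγ
  have hd1 : ∀ i, Differentiable ℝ (fun t => γ t i) := fun i =>
    (hC2 i).differentiable (by norm_num)
  have hd2 : ∀ i, Differentiable ℝ (deriv (fun t => γ t i)) := by
    intro i
    have h2 : ContDiff ℝ ((1:ℕ∞)+1) (fun t => γ t i) := by exact_mod_cast hC2 i
    exact (contDiff_succ_iff_deriv.mp h2).2.2.differentiable (by norm_num)
  have hSd : Differentiable ℝ S := hS.differentiable (by norm_num)
  have hS1 : ∀ i : Fin n, ContDiff ℝ 1 (fun y => fderiv ℝ S y (Pi.single i 1)) := fun i =>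
    (hS.fderiv_right (m := 1) (by norm_num)).clm_apply contDiff_const
  set φ : ℝ → ℝ := fun s =>
    (1 / 2) * ψ * s ^ 2 *
        (∑ i, ∑ j, g (γ s) i j * deriv (fun t => γ t i) s * deriv (fun t => γ t j) s)
      - s * (∑ i, fderiv ℝ S (γ s) (Pi.single i 1) * deriv (fun t => γ t i) s)
      + S (γ s) with hφdef
  suffices key : ∀ s, HasDerivAt φ 0 s by
    exact is_const_of_deriv_eq_zero (fun t => (key t).differentiableAt)
      (fun t => (key t).deriv) s₁ s₂
  intro s
  set p : Fin n → ℝ := γ s with hp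
  set v : Fin n → ℝ := fun i => deriv (fun t => γ t i) s with hv
  set a : Fin n → ℝ := fun i => deriv (deriv (fun t => γ t i)) s with ha
  have hxi : ∀ i, HasDerivAt (fun t => γ t i) (v i) s := fun i => ((hd1 i) s).hasDerivAt
  have hvi : ∀ i, HasDerivAt (deriv (fun t => γ t i)) (a i) s := fun i => ((hd2 i) s).hasDerivAt
  have hcurve : HasDerivAt γ v s := hasDerivAt_pi.mpr hxi
  have hchain : ∀ (f : (Fin n → ℝ) → ℝ), DifferentiableAt ℝ f p →
      HasDerivAt (fun t => f (γ t)) (∑ k, v k * fderiv ℝ f p (Pi.single k 1)) s := by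
    intro f hf
    have h := hf.hasFDerivAt.comp_hasDerivAt s hcurve
    rwa [clm_sum_repr] at h
  have hgc : ∀ i j, HasDerivAt (fun t => g (γ t) i j)
      (∑ k, v k * fderiv ℝ (fun y => g y i j) p (Pi.single k 1)) s := fun i j =>
    hchain _ (((hg_C1 i j).differentiable (by norm_num)) p)
  have hA : HasDerivAt (fun t => ∑ i, ∑ j, g (γ t) i j * deriv (fun u => γ u i) t
        * deriv (fun u => γ u j) t)
      (∑ i, ∑ j, (((∑ k, v k * fderiv ℝ (fun y => g y i j) p (Pi.single k 1)) * v i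
        + g p i j * a i) * v j + g p i j * v i * a j)) s :=
    HasDerivAt.fun_sum fun i _ => HasDerivAt.fun_sum fun j _ => ((hgc i j).fun_mul (hvi i)).fun_mul (hvi j)
  have hB : HasDerivAt (fun t => ∑ i, fderiv ℝ S (γ t) (Pi.single i 1) * deriv (fun u => γ u i) t)
      (∑ i, ((∑ j, v j * fderiv ℝ (fun y => fderiv ℝ S y (Pi.single i 1)) p (Pi.single j 1)) * v i
        + fderiv ℝ S p (Pi.single i 1) * a i)) s :=
    HasDerivAt.fun_sum fun i _ =>
      (hchain _ (((hS1 i).differentiable (by norm_num)) p)).fun_mul (hvi i)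
  have hC : HasDerivAt (fun t => S (γ t)) (∑ k, v k * fderiv ℝ S p (Pi.single k 1)) s :=
    hchain S (hSd p)
  have hsq : HasDerivAt (fun t : ℝ => (1:ℝ)/2 * ψ * t ^ 2) ((1:ℝ)/2 * ψ * (2 * s ^ 1)) s := by
    have := (hasDerivAt_pow 2 s).const_mul ((1:ℝ)/2 * ψ)
    simpa using this
  have hcomb := ((hsq.fun_mul hA).fun_sub ((hasDerivAt_id s).fun_mul hB)).fun_add hC
  have hgeod : ∀ i, a i = -∑ j, ∑ k, christoffel g i j k p * v j * v k := fun i => hgeo s i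
  have hA0 := noether_A' g hg_symm hg_inv p v a hgeod
  have hB0 := noether_B' g S ψ p v a (fun i j => hgradHV p i j) hgeod
  refine hcomb.congr_deriv ?_
  symm
  simp only [id_eq]
  have hAg : (∑ i, ∑ j, g (γ s) i j * deriv (fun u => γ u i) s * deriv (fun u => γ u j) s)
      = ∑ i, ∑ j, g p i j * v i * v j := rfl
  have hBg : (∑ i, fderiv ℝ S (γ s) (Pi.single i 1) * deriv (fun u => γ u i) s)
      = ∑ i, fderiv ℝ S p (Pi.single i 1) * v i := rfl
  have hCB : (∑ k, v k * fderiv ℝ S p (Pi.single k 1))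
      = ∑ i, fderiv ℝ S p (Pi.single i 1) * v i :=
    Finset.sum_congr rfl fun i _ => mul_comm _ _
  rw [hAg, hBg, hA0, hB0, hCB]
  ring
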